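/- Let X be a rearrangement invariant sequence space on which the discrete Cesàro operator C_d is bounded. Then the order continuous part of the Cesàro sequence space CX equals { x : C_d(|x|) ∈ X_a }, i.e., (CX)_a = C(X_a). -/

import Mathlib

open Filter Topology MeasureTheory Set

/-- A **Banach ideal space** on a measure space `(α, μ)`: a collection of (real-valued)
measurable functions with a complete lattice-compatible norm satisfying the ideal property. -/
structure BanachIdealSpace (α : Type*) [MeasurableSpace α] (μ : Measure α) where
  Mem : (α → ℝ) → Prop
  N : (α → ℝ) → ℝ
  mem_zero : Mem 0
  mem_add : ∀ f g, Mem f → Mem g → Mem (f + g)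
  mem_smul : ∀ (c : ℝ) f, Mem f → Mem (c • f)
  measurable : ∀ f, Mem f → AEMeasurable f μ
  N_nonneg : ∀ f, 0 ≤ N f
  N_zero : N 0 = 0
  N_eq_zero : ∀ f, Mem f → N f = 0 → (∀ᵐ x ∂μ, f x = 0)
  N_add : ∀ f g, Mem f → Mem g → N (f + g) ≤ N f + N g
  N_smul : ∀ (c : ℝ) f, N (c • f) = |c| * N f
  ideal : ∀ f g, AEMeasurable f μ → (∀ᵐ x ∂μ, |f x| ≤ |g x|) → Mem g →
    Mem f ∧ N f ≤ N g
  complete : ∀ u : ℕ → (α → ℝ), (∀ n, Mem (u n)) →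
    (∀ ε : ℝ, 0 < ε → ∃ n₀ : ℕ, ∀ m n, n₀ ≤ m → n₀ ≤ n → N (u m - u n) < ε) →
    ∃ f, Mem f ∧ Tendsto (fun n => N (u n - f)) atTop (𝓝 0)

namespace BanachIdealSpace

variable {α : Type*} [MeasurableSpace α] {μ : Measure α}

/-- Distance (w.r.t. a norm functional `N`) from `f` to a set `S` of functions. -/
noncomputable def distIn (N : (α → ℝ) → ℝ) (f : α → ℝ) (S : Set (α → ℝ)) : ℝ :=
  sInf ((fun g => N (f - g)) '' S)

/-- The set of **order continuous elements** of a (generalized) function space given by a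
membership predicate `Mem` and a norm `N`: those `f` such that every sequence `uₙ` with
`0 ≤ uₙ ≤ |f|` a.e., a.e. non-increasing and converging to `0` a.e., satisfies `N (uₙ) → 0`. -/
def ocSet (μ : Measure α) (Mem : (α → ℝ) → Prop) (N : (α → ℝ) → ℝ) : Set (α → ℝ) :=
  {f | Mem f ∧ ∀ u : ℕ → (α → ℝ), (∀ n, Mem (u n)) →
    (∀ n, ∀ᵐ x ∂μ, 0 ≤ u n x ∧ u n x ≤ |f x|) →
    (∀ n, ∀ᵐ x ∂μ, u (n + 1) x ≤ u n x) →
    (∀ᵐ x ∂μ, Tendsto (fun n => u n x) atTop (𝓝 0)) →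
    Tendsto (fun n => N (u n)) atTop (𝓝 0)}

/-- The ideal `X_a` of order continuous elements of a Banach ideal space `X`. -/
def oc (X : BanachIdealSpace α μ) : Set (α → ℝ) := ocSet μ X.Mem X.N

/-- An **order ideal** of a Banach ideal space: a closed solid linear subspace. -/
structure IsOrderIdeal (X : BanachIdealSpace α μ) (J : Set (α → ℝ)) : Prop where
  subset : ∀ f ∈ J, X.Mem f
  zero : (0 : α → ℝ) ∈ J
  add : ∀ f g, f ∈ J → g ∈ J → f + g ∈ J
  smul : ∀ (c : ℝ) f, f ∈ J → c • f ∈ J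
  solid : ∀ f g, f ∈ J → X.Mem g → (∀ᵐ x ∂μ, |g x| ≤ |f x|) → g ∈ J
  closed : ∀ (u : ℕ → (α → ℝ)) f, (∀ n, u n ∈ J) → X.Mem f →
    Tendsto (fun n => X.N (f - u n)) atTop (𝓝 0) → f ∈ J

/-- The **Fatou property** of a Banach ideal space. -/
def Fatou (X : BanachIdealSpace α μ) : Prop :=
  ∀ (u : ℕ → (α → ℝ)) (f : α → ℝ), (∀ n, X.Mem (u n)) → AEMeasurable f μ →
    (∀ᵐ x ∂μ, 0 ≤ u 0 x) → (∀ᵐ x ∂μ, Monotone fun n => u n x) →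
    (∀ᵐ x ∂μ, Tendsto (fun n => u n x) atTop (𝓝 (f x))) →
    BddAbove (Set.range fun n => X.N (u n)) →
    X.Mem f ∧ Tendsto (fun n => X.N (u n)) atTop (𝓝 (X.N f))

/-- The **semi-Fatou property**: if `0 ≤ uₙ ↑ f ∈ X` then `‖uₙ‖ ↑ ‖f‖`. -/
def SemiFatou (X : BanachIdealSpace α μ) : Prop :=
  ∀ (u : ℕ → (α → ℝ)) (f : α → ℝ), (∀ n, X.Mem (u n)) → X.Mem f →
    (∀ᵐ x ∂μ, 0 ≤ u 0 x) → (∀ᵐ x ∂μ, Monotone fun n => u n x) →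
    (∀ᵐ x ∂μ, Tendsto (fun n => u n x) atTop (𝓝 (f x))) →
    Tendsto (fun n => X.N (u n)) atTop (𝓝 (X.N f))

/-- A Banach ideal space is **rearrangement invariant (symmetric)**: equimeasurable
functions belong to the space simultaneously and have equal norms. -/
def Symmetric (X : BanachIdealSpace α μ) : Prop :=
  ∀ f g, AEMeasurable f μ →
    (∀ lam : ℝ, 0 < lam → μ {x | lam < |f x|} = μ {x | lam < |g x|}) →
    X.Mem g → X.Mem f ∧ X.N f = X.N g

/-- The **non-increasing rearrangement** of a function `f` (w.r.t. the measure `μ`). -/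
noncomputable def rear (μ : Measure α) (f : α → ℝ) (t : ℝ) : ℝ :=
  sInf {lam : ℝ | 0 < lam ∧ μ {x | lam < |f x|} ≤ ENNReal.ofReal t}

/-- A (generalized) function space given by `(Mem, N)` contains a **lattice isometric copy
of `ℓ∞`**: there is a linear map from bounded sequences which preserves absolute values
(hence the lattice operations) and is an isometry for the sup norm on bounded sequences. -/
def HasLatticeCopyLinf (Mem : (α → ℝ) → Prop) (N : (α → ℝ) → ℝ) : Prop :=
  ∃ T : (ℕ → ℝ) → (α → ℝ),
    (∀ x y, T (x + y) = T x + T y) ∧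
    (∀ (c : ℝ) x, T (c • x) = c • T x) ∧
    (∀ x, T (fun n => |x n|) = fun t => |T x t|) ∧
    (∀ x : ℕ → ℝ, BddAbove (Set.range fun n => |x n|) →
      Mem (T x) ∧ N (T x) = ⨆ n, |x n|)

end BanachIdealSpace

open BanachIdealSpace

/-- The discrete Cesàro operator `C_d(x)_n = (1/n) Σ_{k=1}^n x_k` (indexed from `0`). -/
noncomputable def cesaroSeq (x : ℕ → ℝ) (n : ℕ) : ℝ :=
  (∑ k ∈ Finset.range (n + 1), x k) / (n + 1)


private lemma ae_count_iff {p : ℕ → Prop} :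
    (∀ᵐ n ∂(Measure.count : Measure ℕ), p n) ↔ ∀ n, p n := by
  rw [MeasureTheory.ae_iff, Measure.count_eq_zero_iff]
  simp [Set.eq_empty_iff_forall_notMem]

private lemma cesaro_nonneg {a : ℕ → ℝ} (ha : ∀ k, 0 ≤ a k) (m : ℕ) :
    0 ≤ cesaroSeq a m :=
  div_nonneg (Finset.sum_nonneg fun k _ => ha k) (by positivity)

private lemma cesaro_le_cesaro {a b : ℕ → ℝ} (h : ∀ k, a k ≤ b k) (m : ℕ) :
    cesaroSeq a m ≤ cesaroSeq b m := by
  unfold cesaroSeq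
  rw [div_le_div_iff_of_pos_right (by positivity)]
  exact Finset.sum_le_sum fun k _ => h k

private lemma cesaro_tail_eq (a : ℕ → ℝ) (M m : ℕ) (h : M ≤ m + 1) :
    cesaroSeq (fun k => if M ≤ k then a k else 0) m
      = (∑ k ∈ Finset.Ico M (m + 1), a k) / (m + 1) := by
  unfold cesaroSeq
  congr 1
  rw [Finset.range_eq_Ico, ← Finset.sum_Ico_consecutive _ (Nat.zero_le M) h]
  rw [Finset.sum_congr rfl (fun k hk => if_neg (by simp at hk; omega)),
    Finset.sum_const_zero, zero_add]
  exact Finset.sum_congr rfl fun k hk => if_pos (by simp at hk; omega)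

/-- Let `X` be a rearrangement invariant sequence space on which the discrete Cesàro
operator `C_d` is bounded. Then the order continuous part of the Cesàro sequence space
`CX` equals `{ x : C_d(|x|) ∈ X_a }`, i.e. `(CX)_a = C(X_a)`. -/
theorem oc_cesaro_seq_eq (X : BanachIdealSpace ℕ Measure.count)
    (hsymm : X.Symmetric)
    (hCbdd : ∃ K : ℝ, ∀ x, X.Mem x →
      X.Mem (cesaroSeq x) ∧ X.N (cesaroSeq x) ≤ K * X.N x) :
    ocSet Measure.count (fun x => X.Mem (cesaroSeq fun n => |x n|))
        (fun x => X.N (cesaroSeq fun n => |x n|)) =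
      {x | X.Mem (cesaroSeq fun n => |x n|) ∧ (cesaroSeq fun n => |x n|) ∈ X.oc} := by
  classical
  obtain ⟨K, hK⟩ := hCbdd
  ext x
  simp only [ocSet, oc, Set.mem_setOf_eq]
  set f : ℕ → ℝ := cesaroSeq (fun n => |x n|) with hfdef
  have hmeas : ∀ g : ℕ → ℝ, AEMeasurable g (Measure.count : Measure ℕ) :=
    fun g => (Measurable.of_discrete).aemeasurable
  have hfnn : ∀ m, 0 ≤ f m := fun m => cesaro_nonneg (fun k => abs_nonneg _) m
  constructor
  · rintro ⟨hmem, hprop⟩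
    refine ⟨hmem, hmem, ?_⟩
    intro u hu hub hdec hlim
    replace hub : ∀ n m, 0 ≤ u n m ∧ u n m ≤ |f m| := fun n => ae_count_iff.mp (hub n)
    replace hlim : ∀ m, Tendsto (fun n => u n m) atTop (𝓝 0) := ae_count_iff.mp hlim
    have hub' : ∀ n m, u n m ≤ f m := fun n m =>
      (hub n m).2.trans_eq (abs_of_nonneg (hfnn m))
    by_cases hf0 : ∀ m, f m = 0
    · have hz : ∀ n, u n = 0 := fun n => funext fun m =>
        le_antisymm ((hub' n m).trans_eq (hf0 m)) (hub n m).1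
      have hN : ∀ n, X.N (u n) = 0 := fun n => by rw [hz n, X.N_zero]
      simpa [hN] using (tendsto_const_nhds : Tendsto (fun _ : ℕ => (0:ℝ)) atTop (𝓝 0))
    push_neg at hf0
    obtain ⟨j, hj0⟩ := hf0
    have hjpos : 0 < f j := (hfnn j).lt_of_ne (Ne.symm hj0)
    have hsum_pos : 0 < ∑ i ∈ Finset.range (j + 1), |x i| := by
      by_contra h
      push_neg at h
      have : f j ≤ 0 := div_nonpos_of_nonpos_of_nonneg h (by positivity)
      linarith
    have hfpos : ∀ k, j ≤ k → 0 < f k := by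
      intro k hk
      have hle : ∑ i ∈ Finset.range (j + 1), |x i| ≤ ∑ i ∈ Finset.range (k + 1), |x i| :=
        Finset.sum_le_sum_of_subset_of_nonneg
          (Finset.range_subset_range.2 (by omega)) (fun i _ _ => abs_nonneg _)
      exact div_pos (lt_of_lt_of_le hsum_pos hle) (by positivity)
    -- the unit vector e_j and its iterated Cesàro transforms
    set e : ℕ → ℝ := fun m => if m = j then (1 : ℝ) else 0 with he
    have hmeme : X.Mem e := by
      refine (X.ideal e ((f j)⁻¹ • f) (hmeas e) ?_ (X.mem_smul _ _ hmem)).1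
      rw [ae_count_iff]
      intro m
      by_cases hm : m = j
      · subst hm
        simp [he, Pi.smul_apply, abs_of_nonneg, inv_mul_cancel₀ hjpos.ne']
      · simp [he, hm, abs_nonneg]
        positivity
    obtain ⟨hmem_ge, -⟩ := hK e hmeme
    set ge : ℕ → ℝ := cesaroSeq e with hge
    obtain ⟨hmemG, -⟩ := hK ge hmem_ge
    set G : ℕ → ℝ := cesaroSeq ge with hG
    have hge_eq : ∀ k, ge k = (if j ≤ k then (1:ℝ) else 0) / (k + 1) := by
      intro k
      rw [hge, cesaroSeq]
      congr 1
      rw [he]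
      rw [Finset.sum_ite_eq' (Finset.range (k + 1)) j (fun _ => (1:ℝ))]
      simp [Nat.lt_succ_iff]
    have hge_nn : ∀ k, 0 ≤ ge k := by
      intro k
      rw [hge_eq]
      positivity
    have hG_nn : ∀ m, 0 ≤ G m := fun m => cesaro_nonneg hge_nn m
    -- the divergent harmonic tail sums A R
    set A : ℕ → ℝ := fun R => ∑ k ∈ Finset.Ico j (R + 1), (1 : ℝ) / (k + 1) with hA
    have hApos : ∀ R, j ≤ R → 0 < A R := by
      intro R hR
      refine Finset.sum_pos (fun k _ => by positivity) ⟨j, ?_⟩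
      simp [Finset.mem_Ico]
      omega
    have hAtop : Tendsto A atTop atTop := by
      have hH : Tendsto (fun n : ℕ => ∑ i ∈ Finset.range n, (1:ℝ) / (i + 1)) atTop atTop :=
        Real.tendsto_sum_range_one_div_nat_succ_atTop
      have h1 : Tendsto (fun R : ℕ => (∑ i ∈ Finset.range (R + 1), (1:ℝ) / (i + 1))
          - ∑ i ∈ Finset.range j, (1:ℝ) / (i + 1)) atTop atTop :=
        (hH.comp (tendsto_add_atTop_nat 1)).atTop_add tendsto_const_nhds
      refine h1.congr' ?_
      filter_upwards [eventually_ge_atTop j] with R hR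
      exact (Finset.sum_Ico_eq_sub _ (by omega : j ≤ R + 1)).symm
    have hG_lb : ∀ R m, j ≤ R → R ≤ m → A R / (m + 1) ≤ G m := by
      intro R m hjR hRm
      rw [hG, cesaroSeq]
      apply div_le_div_of_nonneg_right ?_ (by positivity)
      calc A R = ∑ k ∈ Finset.Ico j (R + 1), ge k := by
            refine Finset.sum_congr rfl fun k hk => ?_
            rw [hge_eq k, if_pos (by simp only [Finset.mem_Ico] at hk; omega)]
        _ ≤ ∑ k ∈ Finset.range (m + 1), ge k :=
            Finset.sum_le_sum_of_subset_of_nonneg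
              (fun k hk => by
                simp only [Finset.mem_Ico, Finset.mem_range] at hk ⊢; omega)
              (fun k _ _ => hge_nn k)
    -- Step A : tails of f are small in X-norm
    have stepA : ∀ ε : ℝ, 0 < ε → ∃ R, X.Mem (fun m => if R ≤ m then f m else 0) ∧
        X.N (fun m => if R ≤ m then f m else 0) < ε := by
      intro ε hε
      set w : ℕ → ℕ → ℝ := fun M k => if M ≤ k then |x k| else 0 with hw
      have hwnn : ∀ M k, 0 ≤ w M k := by
        intro M k
        by_cases hk : M ≤ k <;> simp [hw, hk, abs_nonneg]
      have hwabs : ∀ M, (fun k => |w M k|) = w M :=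
        fun M => funext fun k => abs_of_nonneg (hwnn M k)
      have hwle : ∀ M k, w M k ≤ |x k| := by
        intro M k
        by_cases hk : M ≤ k <;> simp [hw, hk, abs_nonneg]
      have hcw_nn : ∀ M m, 0 ≤ cesaroSeq (w M) m := fun M m => cesaro_nonneg (hwnn M) m
      have hcw_le : ∀ M m, cesaroSeq (w M) m ≤ f m := fun M m => cesaro_le_cesaro (hwle M) m
      have hmemw : ∀ M, X.Mem (cesaroSeq fun k => |w M k|) := by
        intro M
        rw [hwabs]
        refine (X.ideal _ f (hmeas _) (ae_count_iff.mpr fun m => ?_) hmem).1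
        rw [abs_of_nonneg (hcw_nn M m), abs_of_nonneg (hfnn m)]
        exact hcw_le M m
      have h1 : Tendsto (fun M => X.N (cesaroSeq fun k => |w M k|)) atTop (𝓝 0) := by
        refine hprop w hmemw ?_ ?_ ?_
        · intro M
          rw [ae_count_iff]
          exact fun k => ⟨hwnn M k, hwle M k⟩
        · intro M
          rw [ae_count_iff]
          intro k
          show (if M + 1 ≤ k then |x k| else 0) ≤ (if M ≤ k then |x k| else 0)
          by_cases hk : M + 1 ≤ k
          · rw [if_pos hk, if_pos (by omega)]
          · rw [if_neg hk]
            exact hwnn M k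
        · rw [ae_count_iff]
          intro k
          refine tendsto_const_nhds.congr' ?_
          filter_upwards [eventually_ge_atTop (k + 1)] with M hM
          show (0 : ℝ) = if M ≤ k then |x k| else 0
          rw [if_neg (by omega)]
      obtain ⟨M, hM⟩ := (h1.eventually (gt_mem_nhds (half_pos hε))).exists
      rw [hwabs M] at hM
      set S : ℝ := ∑ k ∈ Finset.range M, |x k| with hS
      have hSnn : 0 ≤ S := Finset.sum_nonneg fun k _ => abs_nonneg _
      have h2 : Tendsto (fun R => S * (A R)⁻¹ * X.N G) atTop (𝓝 0) := by
        have h3 : Tendsto (fun R => (A R)⁻¹) atTop (𝓝 0) := hAtop.inv_tendsto_atTop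
        have h4 := (h3.const_mul S).mul_const (X.N G)
        simpa using h4
      obtain ⟨R, hR1, hRj, hRM⟩ :
          ∃ R, S * (A R)⁻¹ * X.N G < ε / 2 ∧ j ≤ R ∧ M ≤ R := by
        obtain ⟨R, h, h'⟩ := ((h2.eventually (gt_mem_nhds (half_pos hε))).and
          ((eventually_ge_atTop j).and (eventually_ge_atTop M))).exists
        exact ⟨R, h, h'.1, h'.2⟩
      have hcoef : 0 ≤ S * (A R)⁻¹ := mul_nonneg hSnn (inv_nonneg.2 (hApos R hRj).le)
      have hpt : ∀ m, (if R ≤ m then f m else 0) ≤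
          (cesaroSeq (w M) + (S * (A R)⁻¹) • G) m := by
        intro m
        simp only [Pi.add_apply, Pi.smul_apply, smul_eq_mul]
        have hGm := hG_nn m
        have hcoefG : 0 ≤ S * (A R)⁻¹ * G m := mul_nonneg hcoef hGm
        by_cases hm : R ≤ m
        · rw [if_pos hm]
          have hMm : M ≤ m + 1 := by omega
          have h8 : cesaroSeq (w M) m = (∑ k ∈ Finset.Ico M (m + 1), |x k|) / (m + 1) :=
            cesaro_tail_eq (fun k => |x k|) M m hMm
          have h9 : f m = (∑ k ∈ Finset.range (m + 1), |x k|) / (m + 1) := rfl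
          have hkey : f m = S / (m + 1) + cesaroSeq (w M) m := by
            rw [h9, h8, ← add_div]
            congr 1
            rw [hS]
            exact (Finset.sum_range_add_sum_Ico _ hMm).symm
          have h5 : A R / (m + 1) ≤ G m := hG_lb R m hRj (by omega)
          have h6 : S / (m + 1) ≤ S * (A R)⁻¹ * G m := by
            have hAne : A R ≠ 0 := (hApos R hRj).ne'
            have h7 : S / (m + 1) = S * (A R)⁻¹ * (A R / (m + 1)) := by
              field_simp
            rw [h7]
            exact mul_le_mul_of_nonneg_left h5 hcoef
          rw [hkey]
          linarith
        · rw [if_neg hm]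
          have := hcw_nn M m
          linarith
      have hmemw' : X.Mem (cesaroSeq (w M)) := by
        rw [← hwabs M]
        exact hmemw M
      have hmemrhs : X.Mem (cesaroSeq (w M) + (S * (A R)⁻¹) • G) :=
        X.mem_add _ _ hmemw' (X.mem_smul _ _ hmemG)
      have htail_nn : ∀ m, (0:ℝ) ≤ if R ≤ m then f m else 0 := by
        intro m
        by_cases hm : R ≤ m <;> simp [hm, hfnn m]
      have hrhs_nn' : ∀ m, 0 ≤ (cesaroSeq (w M) + (S * (A R)⁻¹) • G) m := by
        intro m
        simp only [Pi.add_apply, Pi.smul_apply, smul_eq_mul]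
        have := hcw_nn M m
        have := mul_nonneg hcoef (hG_nn m)
        linarith
      have hmemtail : X.Mem (fun m => if R ≤ m then f m else 0) := by
        refine (X.ideal _ f (hmeas _) (ae_count_iff.mpr fun m => ?_) hmem).1
        rw [abs_of_nonneg (htail_nn m), abs_of_nonneg (hfnn m)]
        by_cases hm : R ≤ m <;> simp [hm, hfnn m]
      refine ⟨R, hmemtail, ?_⟩
      have hid := X.ideal (fun m => if R ≤ m then f m else 0) _ (hmeas _)
        (ae_count_iff.mpr fun m => by
          rw [abs_of_nonneg (htail_nn m), abs_of_nonneg (hrhs_nn' m)]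
          exact hpt m) hmemrhs
      have hadd := X.N_add (cesaroSeq (w M)) ((S * (A R)⁻¹) • G) hmemw'
        (X.mem_smul _ _ hmemG)
      rw [X.N_smul, abs_of_nonneg hcoef] at hadd
      have := hid.2.trans hadd
      linarith
    -- main argument
    rw [Metric.tendsto_atTop]
    intro ε hε
    obtain ⟨R, hmemtail, htail⟩ := stepA (ε / 3) (by positivity)
    set δ : ℝ := (ε / 3) / (X.N f + 1) with hδ
    have hNf : 0 ≤ X.N f := X.N_nonneg f
    have hδpos : 0 < δ := div_pos (by positivity) (by linarith)
    have hcoord : ∀ k, ∃ Nk : ℕ, ∀ n, Nk ≤ n → u n k ≤ δ * f k := by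
      intro k
      rcases eq_or_lt_of_le (hfnn k) with h0 | hpos
      · exact ⟨0, fun n _ => by
          have h1 := hub' n k
          have h2 := (hub n k).1
          nlinarith⟩
      · have hev : ∀ᶠ n in atTop, u n k < δ * f k :=
          (hlim k).eventually (gt_mem_nhds (mul_pos hδpos hpos))
        obtain ⟨Nk, hNk⟩ := eventually_atTop.mp hev
        exact ⟨Nk, fun n hn => (hNk n hn).le⟩
    choose Nk hNk using hcoord
    refine ⟨(Finset.range R).sup Nk, fun n hn => ?_⟩
    have hpt : ∀ m, u n m ≤ (δ • f + fun m => if R ≤ m then f m else 0) m := by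
      intro m
      simp only [Pi.add_apply, Pi.smul_apply, smul_eq_mul]
      by_cases hm : m < R
      · have h1 := hNk m n (le_trans (Finset.le_sup (Finset.mem_range.2 hm)) hn)
        rw [if_neg (by omega)]
        linarith
      · push_neg at hm
        rw [if_pos hm]
        have h1 := hub' n m
        have h2 : 0 ≤ δ * f m := mul_nonneg hδpos.le (hfnn m)
        linarith
    have hrhs_nn : ∀ m, 0 ≤ (δ • f + fun m => if R ≤ m then f m else 0) m := by
      intro m
      simp only [Pi.add_apply, Pi.smul_apply, smul_eq_mul]
      have h3 := hfnn m
      have h4 : 0 ≤ δ * f m := mul_nonneg hδpos.le (hfnn m)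
      by_cases hm : R ≤ m <;> simp [hm] <;> linarith
    have hmemrhs : X.Mem (δ • f + fun m => if R ≤ m then f m else 0) :=
      X.mem_add _ _ (X.mem_smul δ f hmem) hmemtail
    have hid := X.ideal (u n) _ (hmeas _) (ae_count_iff.mpr fun m => by
      rw [abs_of_nonneg (hub n m).1, abs_of_nonneg (hrhs_nn m)]
      exact hpt m) hmemrhs
    have hadd := X.N_add _ _ (X.mem_smul δ f hmem) hmemtail
    rw [X.N_smul, abs_of_nonneg hδpos.le] at hadd
    have hδf : δ * X.N f < ε / 3 := by
      have h1 : δ * (X.N f + 1) = ε / 3 := div_mul_cancel₀ _ (by linarith)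
      nlinarith
    have hfinal : X.N (u n) < ε := by
      have := hid.2.trans hadd
      linarith
    rw [Real.dist_eq, sub_zero, abs_of_nonneg (X.N_nonneg _)]
    exact hfinal

  · rintro ⟨hmem, -, hoc⟩
    refine ⟨hmem, ?_⟩
    intro u hu hub hdec hlim
    replace hub : ∀ n m, 0 ≤ u n m ∧ u n m ≤ |x m| := fun n => ae_count_iff.mp (hub n)
    replace hdec : ∀ n m, u (n + 1) m ≤ u n m := fun n => ae_count_iff.mp (hdec n)
    replace hlim : ∀ m, Tendsto (fun n => u n m) atTop (𝓝 0) := ae_count_iff.mp hlim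
    have habs : ∀ n m, |u n m| = u n m := fun n m => abs_of_nonneg (hub n m).1
    apply hoc (fun n => cesaroSeq fun m => |u n m|) hu
    · intro n
      rw [ae_count_iff]
      intro m
      refine ⟨cesaro_nonneg (fun k => abs_nonneg _) m, ?_⟩
      rw [abs_of_nonneg (hfnn m)]
      exact cesaro_le_cesaro (fun k => (habs n k).trans_le (hub n k).2) m
    · intro n
      rw [ae_count_iff]
      intro m
      exact cesaro_le_cesaro (fun k => by rw [habs, habs]; exact hdec n k) m
    · rw [ae_count_iff]
      intro m
      have hsum : Tendsto (fun n => ∑ k ∈ Finset.range (m + 1), |u n k|) atTop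
          (𝓝 (∑ k ∈ Finset.range (m + 1), (0 : ℝ))) := by
        refine tendsto_finset_sum _ fun k _ => ?_
        exact (hlim k).congr fun n => (habs n k).symm
      simp only [Finset.sum_const_zero] at hsum
      have := hsum.div_const ((m : ℝ) + 1)
      rw [zero_div] at this
      exact this.congr fun n => by simp [cesaroSeq]
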